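/- The potential Ψ_k = (1+γ)^k·( h_k(y^k) + (λ_min⁺/2)·‖z^k − x̄‖² ) is non-increasing along the accelerated gossip iteration: Ψ_{k+1} − Ψ_k ≤ 0 for every k ≥ 0, where τ = 1/(√χ+1), γ = 1/(√χ−1), and z^k = (1/τ)·x^k − ((1−τ)/τ)·y^k. -/

import Mathlib

open Matrix Finset

namespace AGossipAux



lemma dot_self_nonneg' {n : ℕ} (v : Fin n → ℝ) : 0 ≤ v ⬝ᵥ v :=
  Finset.sum_nonneg fun i _ => mul_self_nonneg _

lemma symm_dot {n : ℕ} {M : Matrix (Fin n) (Fin n) ℝ} (hM : M.IsSymm)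
    (a b : Fin n → ℝ) : a ⬝ᵥ (M *ᵥ b) = b ⬝ᵥ (M *ᵥ a) := by
  have h1 : a ᵥ* M = M *ᵥ a := by
    conv_lhs => rw [← hM]
    rw [vecMul_transpose]
  rw [dotProduct_mulVec, h1, dotProduct_comm]

lemma quad_sub {n : ℕ} (M : Matrix (Fin n) (Fin n) ℝ) (hM : M.IsSymm) (a b : Fin n → ℝ) :
    (a - b) ⬝ᵥ (M *ᵥ (a - b)) =
      a ⬝ᵥ (M *ᵥ a) - 2 * (b ⬝ᵥ (M *ᵥ a)) + b ⬝ᵥ (M *ᵥ b) := by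
  rw [mulVec_sub, dotProduct_sub, sub_dotProduct, sub_dotProduct, symm_dot hM a b]
  ring

lemma lap_quad_eq {n : ℕ} (G : SimpleGraph (Fin n)) [DecidableRel G.Adj] (v : Fin n → ℝ) :
    v ⬝ᵥ (G.lapMatrix ℝ *ᵥ v) =
      (∑ i, ∑ j, if G.Adj i j then (v i - v j)^2 else 0) / 2 := by
  rw [← Matrix.toLinearMap₂'_apply', SimpleGraph.lapMatrix_toLinearMap₂']

lemma lap_quad_nonneg {n : ℕ} (G : SimpleGraph (Fin n)) [DecidableRel G.Adj] (v : Fin n → ℝ) :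
    0 ≤ v ⬝ᵥ (G.lapMatrix ℝ *ᵥ v) := by
  rw [lap_quad_eq]
  apply div_nonneg _ (by norm_num)
  apply Finset.sum_nonneg; intro i _
  apply Finset.sum_nonneg; intro j _
  split_ifs <;> positivity

lemma lap_quad_mono {n : ℕ} {H G : SimpleGraph (Fin n)} [DecidableRel H.Adj]
    [DecidableRel G.Adj] (hHG : H ≤ G) (v : Fin n → ℝ) :
    v ⬝ᵥ (H.lapMatrix ℝ *ᵥ v) ≤ v ⬝ᵥ (G.lapMatrix ℝ *ᵥ v) := by
  rw [lap_quad_eq, lap_quad_eq]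
  have hsum : (∑ i, ∑ j, if H.Adj i j then (v i - v j)^2 else 0)
      ≤ ∑ i, ∑ j, if G.Adj i j then (v i - v j)^2 else 0 := by
    apply Finset.sum_le_sum; intro i _
    apply Finset.sum_le_sum; intro j _
    by_cases hij : H.Adj i j
    · rw [if_pos hij, if_pos (hHG hij)]
    · rw [if_neg hij]
      split_ifs <;> positivity
  linarith

lemma lap_sum_mulVec {n : ℕ} (G : SimpleGraph (Fin n)) [DecidableRel G.Adj] (v : Fin n → ℝ) :
    ∑ i, (G.lapMatrix ℝ *ᵥ v) i = 0 := by
  have h : (fun _ : Fin n => (1:ℝ)) ⬝ᵥ (G.lapMatrix ℝ *ᵥ v) = ∑ i, (G.lapMatrix ℝ *ᵥ v) i := by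
    simp [dotProduct]
  rw [← h, symm_dot (SimpleGraph.isSymm_lapMatrix ℝ G), G.lapMatrix_mulVec_const_eq_zero, dotProduct_zero]

lemma lap_mulVec_const {n : ℕ} (G : SimpleGraph (Fin n)) [DecidableRel G.Adj] (c : ℝ) :
    G.lapMatrix ℝ *ᵥ (fun _ => c) = 0 := by
  have h : (fun _ : Fin n => c) = c • (fun _ : Fin n => (1:ℝ)) := by funext i; simp
  rw [h, mulVec_smul, G.lapMatrix_mulVec_const_eq_zero, smul_zero]

lemma dot3 {n : ℕ} (u w g : Fin n → ℝ) (c1 c2 c3 : ℝ) :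
    (c1 • u + c2 • w - c3 • g) ⬝ᵥ (c1 • u + c2 • w - c3 • g) =
      c1^2*(u ⬝ᵥ u) + c2^2*(w ⬝ᵥ w) + c3^2*(g ⬝ᵥ g) + 2*c1*c2*(u ⬝ᵥ w)
        - 2*c1*c3*(g ⬝ᵥ u) - 2*c2*c3*(g ⬝ᵥ w) := by
  simp only [dotProduct, Pi.add_apply, Pi.sub_apply, Pi.smul_apply, smul_eq_mul,
    Finset.mul_sum, ← Finset.sum_add_distrib, ← Finset.sum_sub_distrib]
  exact Finset.sum_congr rfl fun i _ => by ring

lemma dot_sub_sub {n : ℕ} (u w : Fin n → ℝ) :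
    (u - w) ⬝ᵥ (u - w) = u ⬝ᵥ u - 2*(u ⬝ᵥ w) + w ⬝ᵥ w := by
  rw [dotProduct_sub, sub_dotProduct, sub_dotProduct, dotProduct_comm w u]
  ring

end AGossipAux

open AGossipAux

set_option maxHeartbeats 1000000 in
/-- Along the accelerated gossip iteration over a time-varying graph
sequence with a connected skeleton and spectral bounds `λ_max(L(G_k)) ≤ λmax`,
`λmin ≤ λ_min⁺(L(Ĝ))` (encoded by the corresponding quadratic-form inequalities, the
kernel of `L(Ĝ)` being the constants since `Ĝ` is connected), the potential
`Ψ_k = (1+γ)^k·(h_k(y^k) + (λmin/2)·‖z^k − x̄‖²)` is non-increasing, where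
`χ = λmax/λmin`, `τ = 1/(√χ+1)`, `γ = 1/(√χ−1)` and `z^k = (1/τ)x^k − ((1−τ)/τ)y^k`. -/
theorem accelerated_gossip_potential_nonincreasing
    (n : ℕ) (hn : 0 < n)
    (G : ℕ → SimpleGraph (Fin n)) [instG : ∀ k, DecidableRel (G k).Adj]
    (skel : SimpleGraph (Fin n)) [instS : DecidableRel skel.Adj]
    (hconn : skel.Connected) (hskel : ∀ k, skel ≤ G k)
    (lammax lammin : ℝ) (hlammin : 0 < lammin)
    (hmax : ∀ k (v : Fin n → ℝ), v ⬝ᵥ ((G k).lapMatrix ℝ *ᵥ v) ≤ lammax * (v ⬝ᵥ v))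
    (hmin : ∀ v : Fin n → ℝ, (∑ i, v i) = 0 →
      lammin * (v ⬝ᵥ v) ≤ v ⬝ᵥ (skel.lapMatrix ℝ *ᵥ v))
    (χ : ℝ) (hχdef : χ = lammax / lammin) (hχ : 1 < χ)
    (hatG : ℕ → SimpleGraph (Fin n)) [instH : ∀ k, DecidableRel (hatG k).Adj]
    (hhatG : ∀ k u v, (hatG k).Adj u v ↔ ∀ j ≤ k, (G j).Adj u v)
    (W : ℕ → Matrix (Fin n) (Fin n) ℝ) (hW : ∀ k, W k = (hatG k).lapMatrix ℝ)
    (h : ℕ → (Fin n → ℝ) → ℝ) (hh : ∀ k v, h k v = 1 / 2 * (v ⬝ᵥ (W k *ᵥ v)))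
    (η β τ γ : ℝ)
    (hη : η = 1 / lammax) (hβ : β = (Real.sqrt χ - 1) / (Real.sqrt χ + 1))
    (hτ : τ = 1 / (Real.sqrt χ + 1)) (hγ : γ = 1 / (Real.sqrt χ - 1))
    (x0 : Fin n → ℝ) (x y : ℕ → Fin n → ℝ)
    (hx0 : x 0 = x0) (hy0 : y 0 = x0)
    (hyup : ∀ k, y (k + 1) = x k - η • (W k *ᵥ x k))
    (hxup : ∀ k, x (k + 1) = (1 + β) • y (k + 1) - β • y k)
    (xbar : Fin n → ℝ) (hxbar : ∀ i, xbar i = (∑ j, x0 j) / n)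
    (z : ℕ → Fin n → ℝ)
    (hz : ∀ k, z k = (1 / τ) • x k - ((1 - τ) / τ) • y k)
    (Ψ : ℕ → ℝ)
    (hΨ : ∀ k, Ψ k =
      (1 + γ) ^ k * (h k (y k) + lammin / 2 * ((z k - xbar) ⬝ᵥ (z k - xbar)))) :
    ∀ k : ℕ, Ψ (k + 1) - Ψ k ≤ 0 := by
  -- basic scalar facts
  have hχ0 : (0:ℝ) < χ := lt_trans one_pos hχ
  set s := Real.sqrt χ with hsdef
  have hs1 : 1 < s := by
    have h1 := Real.sqrt_lt_sqrt (by norm_num : (0:ℝ) ≤ 1) hχ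
    rwa [Real.sqrt_one] at h1
  have hs0 : 0 < s := lt_trans one_pos hs1
  have hsne : s ≠ 0 := hs0.ne'
  have hspne : s + 1 ≠ 0 := by positivity
  have hsm : 0 < s - 1 := sub_pos.mpr hs1
  have hss : s * s = χ := Real.mul_self_sqrt hχ0.le
  have hLval : lammax = s * s * lammin := by
    rw [hss, hχdef]; field_simp
  have hLpos : 0 < lammax := by rw [hLval]; positivity
  have hηpos : 0 < η := by rw [hη]; positivity
  have hγpos : 0 < γ := by rw [hγ]; positivity
  -- t = 1/s
  set t := 1 / s with htdef
  have ht0 : 0 < t := by rw [htdef]; positivity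
  have ht1 : t < 1 := by rw [htdef, div_lt_one hs0]; exact hs1
  have hst : s * t = 1 := by rw [htdef]; field_simp
  -- graph order facts
  have hGsub : ∀ k, hatG k ≤ G k := by
    intro k u v huv
    exact (hhatG k u v).1 huv k (le_refl k)
  have hSsub : ∀ k, skel ≤ hatG k := by
    intro k u v huv
    exact (hhatG k u v).2 (fun j _ => hskel j huv)
  have hmono : ∀ k, hatG (k+1) ≤ hatG k := by
    intro k u v huv
    exact (hhatG k u v).2 (fun j hj => (hhatG (k+1) u v).1 huv j (hj.trans (Nat.le_succ k)))
  -- sum invariant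
  have hsum : ∀ k, (∑ i, x k i) = (∑ i, x0 i) ∧ (∑ i, y k i) = (∑ i, x0 i) := by
    intro k
    induction k with
    | zero => rw [hx0, hy0]; exact ⟨rfl, rfl⟩
    | succ k ih =>
      have hy' : (∑ i, y (k+1) i) = ∑ i, x0 i := by
        rw [hyup k, hW k]
        simp only [Pi.sub_apply, Pi.smul_apply, smul_eq_mul]
        rw [Finset.sum_sub_distrib, ← Finset.mul_sum, lap_sum_mulVec]
        simpa using ih.1
      refine ⟨?_, hy'⟩
      rw [hxup k]
      simp only [Pi.sub_apply, Pi.smul_apply, smul_eq_mul]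
      rw [Finset.sum_sub_distrib, ← Finset.mul_sum, ← Finset.mul_sum, hy', ih.2]
      ring
  have hxbarconst : xbar = fun _ : Fin n => (∑ j, x0 j) / n := funext hxbar
  have hsumxbar : (∑ i, xbar i) = ∑ j, x0 j := by
    rw [hxbarconst]
    rw [Finset.sum_const, Finset.card_univ, Fintype.card_fin, nsmul_eq_mul]
    field_simp
  -- coefficients of z
  have hinvτ : 1/τ = s + 1 := by rw [hτ, one_div_one_div]
  have hfrac : (1-τ)/τ = s := by rw [hτ]; field_simp; ring
  have hz1 : ∀ m, z m = (s+1) • x m - s • y m := by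
    intro m; rw [hz m, hinvτ, hfrac]
  intro k
  -- core inequality
  have hcore : h (k+1) (y (k+1)) + lammin/2 * ((z (k+1) - xbar) ⬝ᵥ (z (k+1) - xbar))
      ≤ (1 - t) * (h k (y k) + lammin/2 * ((z k - xbar) ⬝ᵥ (z k - xbar))) := by
    set Wk := (hatG k).lapMatrix ℝ with hWk
    have hWsymm : Wk.IsSymm := SimpleGraph.isSymm_lapMatrix ℝ _
    set X := x k with hX
    set Y := y k with hY
    set gv := Wk *ᵥ X with hgv
    set u := z k - xbar with hu
    set w := X - xbar with hw
    have hy2 : y (k+1) = X - η • gv := by rw [hyup k, hW k]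
    -- vector identity for z (k+1) - xbar
    have hzsucc : z (k+1) - xbar = (1-t) • u + t • w - (s*η) • gv := by
      rw [hu, hw, hz1 (k+1), hz1 k, hxup k, hy2, hβ, htdef]
      funext i
      simp only [Pi.sub_apply, Pi.add_apply, Pi.smul_apply, smul_eq_mul]
      field_simp
      ring
    -- scalar atoms
    set P := gv ⬝ᵥ gv with hP
    set Q := gv ⬝ᵥ u with hQ
    set Rr := gv ⬝ᵥ w with hRr
    set UU := u ⬝ᵥ u with hUU
    set WWn := w ⬝ᵥ w with hWWn
    set UW := u ⬝ᵥ w with hUW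
    set HX := X ⬝ᵥ (Wk *ᵥ X) with hHX
    set DG := (X - Y) ⬝ᵥ gv with hDG
    set DD := (X - Y) ⬝ᵥ (Wk *ᵥ (X - Y)) with hDD
    -- B1 : smoothness/descent bound
    have hGWG : gv ⬝ᵥ (Wk *ᵥ gv) ≤ lammax * P := by
      calc gv ⬝ᵥ (Wk *ᵥ gv) ≤ gv ⬝ᵥ ((G k).lapMatrix ℝ *ᵥ gv) := lap_quad_mono (hGsub k) gv
        _ ≤ lammax * P := hmax k gv
    have hB1 : h (k+1) (y (k+1)) ≤ 1/2 * HX - η/2 * P := by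
      have e0 : h (k+1) (y (k+1)) ≤ 1/2 * ((y (k+1)) ⬝ᵥ (Wk *ᵥ (y (k+1)))) := by
        rw [hh (k+1), hW (k+1)]
        have := lap_quad_mono (hmono k) (y (k+1))
        rw [← hWk] at this
        linarith
      have e1 : (y (k+1)) ⬝ᵥ (Wk *ᵥ (y (k+1)))
          = HX - 2*(η*P) + η^2*(gv ⬝ᵥ (Wk *ᵥ gv)) := by
        rw [hy2, quad_sub Wk hWsymm, ← hgv]
        have a1 : (η • gv) ⬝ᵥ gv = η * P := by
          rw [smul_dotProduct, smul_eq_mul, hP]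
        have a2 : (η • gv) ⬝ᵥ (Wk *ᵥ (η • gv)) = η^2 * (gv ⬝ᵥ (Wk *ᵥ gv)) := by
          rw [mulVec_smul, smul_dotProduct, dotProduct_smul, smul_eq_mul, smul_eq_mul]
          ring
        rw [a1, a2, ← hHX]
      have e2 : η^2 * (gv ⬝ᵥ (Wk *ᵥ gv)) ≤ η^2 * (lammax * P) :=
        mul_le_mul_of_nonneg_left hGWG (sq_nonneg η)
      have e3 : η^2 * lammax = η := by rw [hη]; field_simp
      calc h (k+1) (y (k+1)) ≤ 1/2 * ((y (k+1)) ⬝ᵥ (Wk *ᵥ (y (k+1)))) := e0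
        _ = 1/2 * (HX - 2*(η*P) + η^2*(gv ⬝ᵥ (Wk *ᵥ gv))) := by rw [e1]
        _ ≤ 1/2 * (HX - 2*(η*P) + η^2*(lammax*P)) := by linarith
        _ = 1/2 * HX - η/2 * P := by linear_combination (P/2) * e3
    -- B2 : expansion of the new distance term
    have hsηA : lammin * (s*η) = t := by
      rw [hη, hLval, htdef]; field_simp
    have hsηB : lammin * ((s*η)^2) = η := by
      rw [hη, hLval]; field_simp
    have hZZ : lammin/2 * ((z (k+1) - xbar) ⬝ᵥ (z (k+1) - xbar))
        = lammin/2*((1-t)^2*UU + t^2*WWn + 2*(1-t)*t*UW)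
          - (t - t*t)*Q - (t*t)*Rr + η/2*P := by
      rw [hzsucc, dot3, ← hUU, ← hWWn, ← hP, ← hUW, ← hQ, ← hRr]
      linear_combination (P/2) * hsηB - ((1-t)*Q) * hsηA - (t*Rr) * hsηA
    -- B3 : expansion of h k (y k)
    have hB3 : h k Y = 1/2*HX - DG + 1/2*DD := by
      rw [hh k, hW k, ← hWk]
      have e := quad_sub Wk hWsymm X (X - Y)
      rw [sub_sub_cancel, ← hgv, ← hHX, ← hDG, ← hDD] at e
      rw [e]; ring
    have hDD0 : 0 ≤ DD := by
      rw [hDD, hWk]; exact lap_quad_nonneg _ _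
    -- B4 : DG in terms of Q, Rr
    have hB4 : DG = t*Q - t*Rr := by
      have huw : u - w = s • (X - Y) := by
        rw [hu, hw, hz1 k]
        funext i
        simp only [Pi.sub_apply, Pi.smul_apply, smul_eq_mul]
        ring
      have e : Q - Rr = s * DG := by
        rw [hQ, hRr, hDG, ← dotProduct_sub, huw, dotProduct_smul, smul_eq_mul,
          dotProduct_comm]
      have : t * (Q - Rr) = t * (s * DG) := by rw [e]
      rw [← mul_assoc, mul_comm t s, hst, one_mul] at this
      linarith [this]
    -- B5 : strong convexity at xbar
    have hB5 : HX + lammin * WWn ≤ 2 * Rr := by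
      have hWkxbar : Wk *ᵥ xbar = 0 := by
        rw [hxbarconst, hWk]; exact lap_mulVec_const _ _
      have e := quad_sub Wk hWsymm X w
      rw [hw, sub_sub_cancel, hWkxbar, dotProduct_zero, ← hgv] at e
      have hcw : w ⬝ᵥ gv = Rr := by rw [hRr, dotProduct_comm]
      rw [← hw, hcw, ← hHX] at e
      have hsumw : (∑ i, w i) = 0 := by
        rw [hw]
        simp only [Pi.sub_apply]
        rw [Finset.sum_sub_distrib, (hsum k).1, hsumxbar, sub_self]
      have hstrong : lammin * WWn ≤ w ⬝ᵥ (Wk *ᵥ w) := by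
        calc lammin * WWn ≤ w ⬝ᵥ (skel.lapMatrix ℝ *ᵥ w) := hmin w hsumw
          _ ≤ w ⬝ᵥ (Wk *ᵥ w) := by rw [hWk]; exact lap_quad_mono (hSsub k) w
      linarith
    -- B6 : convexity of the squared norm
    have hB6 : 0 ≤ UU - 2*UW + WWn := by
      have := dot_self_nonneg' (u - w)
      rw [dot_sub_sub, ← hUU, ← hUW, ← hWWn] at this
      linarith
    -- assemble
    have hyk : h k (y k) = h k Y := by rw [hY]
    rw [hyk, hB3, hZZ]
    have aux1 : 0 ≤ (1 - t) * DD := mul_nonneg (by linarith) hDD0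
    have aux2 : 0 ≤ lammin * (t*(1-t)) * (UU - 2*UW + WWn) := by
      apply mul_nonneg (mul_nonneg hlammin.le (mul_nonneg ht0.le (by linarith))) hB6
    have aux3 : 0 ≤ t * (2*Rr - HX - lammin*WWn) := by
      apply mul_nonneg ht0.le (by linarith)
    have aux4 : (1-t)*DG = (1-t)*(t*Q - t*Rr) := by rw [hB4]
    linarith [hB1, aux1, aux2, aux3, aux4]
  -- lift to the potential
  rw [hΨ (k+1), hΨ k, sub_nonpos]
  have hApos : (0:ℝ) < 1 + γ := by linarith
  have hAt : (1 + γ) * (1 - t) = 1 := by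
    rw [hγ, htdef]
    field_simp
    ring
  have hkey : (1 + γ) * (h (k+1) (y (k+1)) + lammin/2 * ((z (k+1) - xbar) ⬝ᵥ (z (k+1) - xbar)))
      ≤ h k (y k) + lammin/2 * ((z k - xbar) ⬝ᵥ (z k - xbar)) := by
    have := mul_le_mul_of_nonneg_left hcore hApos.le
    rwa [← mul_assoc, hAt, one_mul] at this
  calc (1 + γ) ^ (k+1) * (h (k+1) (y (k+1)) + lammin/2 * ((z (k+1) - xbar) ⬝ᵥ (z (k+1) - xbar)))
      = (1 + γ) ^ k * ((1 + γ) * (h (k+1) (y (k+1)) + lammin/2 * ((z (k+1) - xbar) ⬝ᵥ (z (k+1) - xbar)))) := by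
        rw [pow_succ]; ring
    _ ≤ (1 + γ) ^ k * (h k (y k) + lammin/2 * ((z k - xbar) ⬝ᵥ (z k - xbar))) :=
        mul_le_mul_of_nonneg_left hkey (pow_nonneg hApos.le k)
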